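/- For every natural number N ≥ 1 and every real p with 1 < p ≤ π²(N + 1/2)² − 1, and for every x ∈ ℝ, ∑_{n∈ℤ, |x−n|>N} |sinc(x − n)|^p ≤ 2(2/π)^p λ(p; N), with equality at x = 1/2, where λ(p; N) := ∑_{n=1}^∞ 1/(2(n+N) − 1)^p. -/

import Mathlib

open Real

noncomputable def sinc (x : ℝ) : ℝ := if x = 0 then 1 else Real.sin (π * x) / (π * x)

/-- The incomplete Lambda function `λ(s; a) = ∑_{n=1}^∞ (2(n+a)-1)^{-s}`. -/
noncomputable def lam (s a : ℝ) : ℝ := ∑' n : ℕ, 1 / (2 * ((n : ℝ) + 1 + a) - 1) ^ s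

set_option maxHeartbeats 1000000


lemma mono_aux {f f' : ℝ → ℝ} {a b : ℝ}
    (hf : ∀ x ∈ Set.Icc a b, HasDerivAt f (f' x) x)
    (hf' : ∀ x ∈ Set.Ioo a b, 0 ≤ f' x) :
    MonotoneOn f (Set.Icc a b) := by
  apply monotoneOn_of_deriv_nonneg (convex_Icc a b)
  · exact fun x hx => (hf x hx).continuousAt.continuousWithinAt
  · intro x hx
    rw [interior_Icc] at hx
    exact ((hf x (Set.mem_Icc_of_Ioo hx)).differentiableAt).differentiableWithinAt
  · intro x hx
    rw [interior_Icc] at hx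
    rw [(hf x (Set.mem_Icc_of_Ioo hx)).deriv]
    exact hf' x hx

lemma mono_aux_Ici {f f' : ℝ → ℝ} {a : ℝ}
    (hf : ∀ x ∈ Set.Ici a, HasDerivAt f (f' x) x)
    (hf' : ∀ x ∈ Set.Ioi a, 0 ≤ f' x) :
    MonotoneOn f (Set.Ici a) := by
  apply monotoneOn_of_deriv_nonneg (convex_Ici a)
  · exact fun x hx => (hf x hx).continuousAt.continuousWithinAt
  · intro x hx
    rw [interior_Ici] at hx
    exact ((hf x (Set.mem_Ici.2 (le_of_lt (Set.mem_Ioi.1 hx)))).differentiableAt).differentiableWithinAt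
  · intro x hx
    rw [interior_Ici] at hx
    rw [(hf x (Set.mem_Ici.2 (le_of_lt (Set.mem_Ioi.1 hx)))).deriv]
    exact hf' x hx

lemma L_K : ∀ θ ∈ Set.Icc (0:ℝ) (π/2), θ * Real.cos θ ≤ (1 + θ^2/3) * Real.sin θ := by
  have h := mono_aux (f := fun θ => (1 + θ^2/3) * Real.sin θ - θ * Real.cos θ)
      (f' := fun θ => (5*θ/3) * Real.sin θ + (θ^2/3) * Real.cos θ) (a := 0) (b := π/2)
      (by
        intro x hx
        have h1 : HasDerivAt (fun θ : ℝ => (1 + θ^2/3) * Real.sin θ)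
            ((2*x/3) * Real.sin x + (1 + x^2/3) * Real.cos x) x := by
          have := (HasDerivAt.const_add 1 (((hasDerivAt_pow 2 x).div_const 3))).mul (Real.hasDerivAt_sin x)
          refine this.congr_deriv ?_
          ring
        have h2 : HasDerivAt (fun θ : ℝ => θ * Real.cos θ)
            (Real.cos x + x * (-Real.sin x)) x := by
          have := (hasDerivAt_id x).mul (Real.hasDerivAt_cos x)
          refine this.congr_deriv ?_
          try simp only [id_eq]
          try ring
        have := h1.sub h2
        refine this.congr_deriv ?_
        try simp only [id_eq]
        try ring)
      (by
        intro x hx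
        have hs : 0 ≤ Real.sin x := Real.sin_nonneg_of_nonneg_of_le_pi (le_of_lt hx.1)
          (le_trans (le_of_lt hx.2) (by linarith [Real.pi_pos]))
        have hc : 0 ≤ Real.cos x := Real.cos_nonneg_of_mem_Icc
          ⟨by linarith [hx.1, Real.pi_pos], le_of_lt hx.2⟩
        have h0 : (0:ℝ) ≤ x := le_of_lt hx.1
        positivity)
  intro θ hθ
  have := h (Set.left_mem_Icc.2 (by positivity)) hθ hθ.1
  simp at this
  linarith

lemma L_H : ∀ θ ∈ Set.Icc (0:ℝ) (π/2), (θ + θ^3/3) * Real.cos θ ≤ Real.sin θ := by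
  have h := mono_aux (f := fun θ => Real.sin θ - (θ + θ^3/3) * Real.cos θ)
      (f' := fun θ => θ * ((1 + θ^2/3) * Real.sin θ - θ * Real.cos θ)) (a := 0) (b := π/2)
      (by
        intro x hx
        have h2 : HasDerivAt (fun θ : ℝ => (θ + θ^3/3) * Real.cos θ)
            ((1 + x^2) * Real.cos x + (x + x^3/3) * (-Real.sin x)) x := by
          have hpoly : HasDerivAt (fun θ : ℝ => θ + θ^3/3) (1 + x^2) x := by
            have := (hasDerivAt_id x).add ((hasDerivAt_pow 3 x).div_const 3)
            refine this.congr_deriv ?_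
            try simp only [id_eq]
            try ring
          exact hpoly.mul (Real.hasDerivAt_cos x)
        have := (Real.hasDerivAt_sin x).sub h2
        refine this.congr_deriv ?_
        try simp only [id_eq]
        try ring)
      (by
        intro x hx
        have h0 : (0:ℝ) ≤ x := le_of_lt hx.1
        have hK : x * Real.cos x ≤ (1 + x^2/3) * Real.sin x :=
          L_K x ⟨h0, le_of_lt hx.2⟩
        have : 0 ≤ (1 + x^2/3) * Real.sin x - x * Real.cos x := by linarith
        positivity)
  intro θ hθ
  have := h (Set.left_mem_Icc.2 (by positivity)) hθ hθ.1
  simp at this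
  linarith

lemma L_cos : ∀ θ ∈ Set.Icc (0:ℝ) (π/2), Real.cos θ * Real.exp (θ^2/2 + θ^4/12) ≤ 1 := by
  have h := mono_aux (f := fun θ => 1 - Real.cos θ * Real.exp (θ^2/2 + θ^4/12))
      (f' := fun θ => (Real.sin θ - (θ + θ^3/3) * Real.cos θ) * Real.exp (θ^2/2 + θ^4/12))
      (a := 0) (b := π/2)
      (by
        intro x hx
        have hq : HasDerivAt (fun θ : ℝ => θ^2/2 + θ^4/12) (x + x^3/3) x := by
          have := ((hasDerivAt_pow 2 x).div_const 2).add ((hasDerivAt_pow 4 x).div_const 12)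
          refine this.congr_deriv ?_
          ring
        have hexp : HasDerivAt (fun θ : ℝ => Real.exp (θ^2/2 + θ^4/12))
            (Real.exp (x^2/2 + x^4/12) * (x + x^3/3)) x := (Real.hasDerivAt_exp _).comp x hq
        have := ((Real.hasDerivAt_cos x).mul hexp).const_sub 1
        refine this.congr_deriv ?_
        try simp only [id_eq]
        try ring)
      (by
        intro x hx
        have hH := L_H x ⟨le_of_lt hx.1, le_of_lt hx.2⟩
        have : 0 ≤ Real.sin x - (x + x^3/3) * Real.cos x := by linarith
        positivity)
  intro θ hθ
  have := h (Set.left_mem_Icc.2 (by positivity)) hθ hθ.1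
  simp at this
  linarith

lemma L_log1p : ∀ t ∈ Set.Icc (0:ℝ) (1/3), Real.log (1 + t) ≤ t - t^2/2 + t^3/3 := by
  have h := mono_aux (f := fun t => t - t^2/2 + t^3/3 - Real.log (1 + t))
      (f' := fun t => 1 - t + t^2 - (1 + t)⁻¹) (a := 0) (b := 1/3)
      (by
        intro x hx
        have hx1 : (1:ℝ) + x ≠ 0 := by nlinarith [hx.1]
        have hlog : HasDerivAt (fun t : ℝ => Real.log (1 + t)) ((1 + x)⁻¹) x := by
          have := (Real.hasDerivAt_log hx1).comp x ((hasDerivAt_id x).const_add 1)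
          exact this.congr_deriv (by simp)
        have hpoly : HasDerivAt (fun t : ℝ => t - t^2/2 + t^3/3) (1 - x + x^2) x := by
          have := ((hasDerivAt_id x).sub ((hasDerivAt_pow 2 x).div_const 2)).add
            ((hasDerivAt_pow 3 x).div_const 3)
          refine this.congr_deriv ?_
          try simp only [id_eq]
          try ring
        exact hpoly.sub hlog)
      (by
        intro x hx
        have h0 : (0:ℝ) < x := hx.1
        have h1 : (0:ℝ) < 1 + x := by linarith
        rw [sub_nonneg, inv_le_iff_one_le_mul₀ h1]
        nlinarith)
  intro t ht
  have := h (Set.left_mem_Icc.2 (by norm_num)) ht ht.1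
  simp at this
  linarith

lemma L_log1m : ∀ t ∈ Set.Icc (0:ℝ) (1/3),
    -Real.log (1 - t) ≤ t + t^2/2 + t^3/3 + (3/8) * t^4 := by
  have h := mono_aux (f := fun t => t + t^2/2 + t^3/3 + (3/8) * t^4 + Real.log (1 - t))
      (f' := fun t => 1 + t + t^2 + (3/2) * t^3 - (1 - t)⁻¹) (a := 0) (b := 1/3)
      (by
        intro x hx
        have hx1 : (1:ℝ) - x ≠ 0 := by
          have := hx.2; intro h'; rw [sub_eq_zero] at h'; rw [← h'] at this; norm_num at this
        have hlog : HasDerivAt (fun t : ℝ => Real.log (1 - t)) (-(1 - x)⁻¹) x := by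
          have hin : HasDerivAt (fun t : ℝ => 1 - t) (-1 : ℝ) x := by
            simpa using (hasDerivAt_id x).const_sub 1
          have := (Real.hasDerivAt_log hx1).comp x hin
          refine this.congr_deriv ?_
          ring
        have hpoly : HasDerivAt (fun t : ℝ => t + t^2/2 + t^3/3 + (3/8) * t^4)
            (1 + x + x^2 + (3/2) * x^3) x := by
          have := (((hasDerivAt_id x).add ((hasDerivAt_pow 2 x).div_const 2)).add
            ((hasDerivAt_pow 3 x).div_const 3)).add ((hasDerivAt_pow 4 x).const_mul (3/8 : ℝ))
          refine this.congr_deriv ?_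
          try simp only [id_eq]
          try ring
        have := hpoly.add hlog
        refine this.congr_deriv ?_
        try simp only [id_eq]
        try ring)
      (by
        intro x hx
        have h0 : (0:ℝ) < x := hx.1
        have h2 : x < 1/3 := hx.2
        have h1 : (0:ℝ) < 1 - x := by linarith
        rw [sub_nonneg, inv_le_iff_one_le_mul₀ h1]
        nlinarith [mul_pos (mul_pos (mul_pos h0 h0) h0) (by linarith : (0:ℝ) < 1 - 3*x)])
  intro t ht
  have := h (Set.left_mem_Icc.2 (by norm_num)) ht ht.1
  simp at this
  linarith

lemma L_log1m2 : ∀ s ∈ Set.Icc (0:ℝ) (1/2), -Real.log (1 - s) ≤ s + s^2 := by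
  have h := mono_aux (f := fun s => s + s^2 + Real.log (1 - s))
      (f' := fun s => 1 + 2*s - (1 - s)⁻¹) (a := 0) (b := 1/2)
      (by
        intro x hx
        have hx1 : (1:ℝ) - x ≠ 0 := by
          have := hx.2; intro h'; rw [sub_eq_zero] at h'; rw [← h'] at this; norm_num at this
        have hlog : HasDerivAt (fun t : ℝ => Real.log (1 - t)) (-(1 - x)⁻¹) x := by
          have hin : HasDerivAt (fun t : ℝ => 1 - t) (-1 : ℝ) x := by
            simpa using (hasDerivAt_id x).const_sub 1
          have := (Real.hasDerivAt_log hx1).comp x hin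
          refine this.congr_deriv ?_
          ring
        have hpoly : HasDerivAt (fun s : ℝ => s + s^2) (1 + 2*x) x := by
          have := (hasDerivAt_id x).add (hasDerivAt_pow 2 x)
          refine this.congr_deriv ?_
          try simp only [id_eq]
          try ring
        have := hpoly.add hlog
        refine this.congr_deriv ?_
        try simp only [id_eq]
        try ring)
      (by
        intro x hx
        have h0 : (0:ℝ) < x := hx.1
        have h2 : x < 1/2 := hx.2
        have h1 : (0:ℝ) < 1 - x := by linarith
        rw [sub_nonneg, inv_le_iff_one_le_mul₀ h1]
        nlinarith)
  intro s hs
  have := h (Set.left_mem_Icc.2 (by norm_num)) hs hs.1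
  simp at this
  linarith

lemma L_sinh : ∀ x ∈ Set.Ici (0:ℝ), Real.sinh x ≤ x * Real.cosh x := by
  have h := mono_aux_Ici (f := fun x => x * Real.cosh x - Real.sinh x)
      (f' := fun x => x * Real.sinh x) (a := 0)
      (by
        intro x hx
        have := ((hasDerivAt_id x).mul (Real.hasDerivAt_cosh x)).sub (Real.hasDerivAt_sinh x)
        refine this.congr_deriv ?_
        try simp only [id_eq]
        try ring)
      (by
        intro x hx
        have h0 : (0:ℝ) ≤ x := le_of_lt hx
        have : (0:ℝ) ≤ Real.sinh x := Real.sinh_nonneg_iff.2 h0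
        positivity)
  intro x hx
  have := h (Set.self_mem_Ici) hx hx
  simp at this
  linarith

lemma L_logcosh : ∀ x ∈ Set.Ici (0:ℝ), Real.log (Real.cosh x) ≤ x^2/2 := by
  have h := mono_aux_Ici (f := fun x => x^2/2 - Real.log (Real.cosh x))
      (f' := fun x => x - Real.sinh x / Real.cosh x) (a := 0)
      (by
        intro x hx
        have hc : Real.cosh x ≠ 0 := ne_of_gt (Real.cosh_pos x)
        have hlog : HasDerivAt (fun x : ℝ => Real.log (Real.cosh x))
            ((Real.cosh x)⁻¹ * Real.sinh x) x :=
          (Real.hasDerivAt_log hc).comp x (Real.hasDerivAt_cosh x)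
        have := ((hasDerivAt_pow 2 x).div_const 2).sub hlog
        refine this.congr_deriv ?_
        try field_simp
        try ring)
      (by
        intro x hx
        have h0 : (0:ℝ) ≤ x := le_of_lt hx
        have hs := L_sinh x h0
        have hc : (0:ℝ) < Real.cosh x := Real.cosh_pos x
        rw [sub_nonneg, div_le_iff₀ hc]
        linarith)
  intro x hx
  have := h (Set.self_mem_Ici) hx hx
  simp [Real.cosh_zero] at this
  linarith

lemma arith_sq (t d : ℝ) (ht0 : 0 ≤ t) (ht3 : t ≤ 1/3) (hd0 : 0 ≤ d)
    (hd : d ≤ t + (19/48) * t^3) : d^2 ≤ t^2 + (5/6)*t^4 := by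
  have h1 : d^2 ≤ (t + (19/48)*t^3)^2 := by nlinarith
  have h2 : t^2 ≤ 1/9 := by nlinarith
  have h3 : t^6 ≤ t^4 * (1/9) := by nlinarith [pow_nonneg ht0 4]
  nlinarith [pow_nonneg ht0 4]

lemma arith_fin (p w t L1 L2 L3 : ℝ) (hp1 : 1 ≤ p) (hw : 81/4 ≤ w) (hwp : p + 1 ≤ w)
    (ht0 : 0 ≤ t)
    (hL1 : L1 ≤ -(w * t^2/2 + w^2 * t^4/12) * p)
    (hL2 : L2 ≤ ((t^2 + t^4)/2) * p)
    (hL3 : L3 ≤ p^2 * (t^2 + (5/6)*t^4)/2) :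
    L1 + L2 + L3 ≤ 0 := by
  have hp0 : (0:ℝ) < p := by linarith
  have h6 : 6 + 5*p ≤ w^2 := by
    nlinarith [mul_nonneg (by linarith : (0:ℝ) ≤ w - 81/4) (by linarith : (0:ℝ) ≤ w - 5)]
  have hA : 0 ≤ p * t^2 * (w - 1 - p) :=
    mul_nonneg (mul_nonneg hp0.le (sq_nonneg t)) (by linarith)
  have hB : 0 ≤ p * t^4 * (w^2 - 6 - 5*p) :=
    mul_nonneg (mul_nonneg hp0.le (pow_nonneg ht0 4)) (by linarith)
  nlinarith [hA, hB]

lemma arith_dp (d p X : ℝ) (hX : d^2 ≤ X) : (d*p)^2/2 ≤ p^2 * X/2 := by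
  nlinarith [sq_nonneg p]

lemma key_half (b u p : ℝ) (hb : 3/2 ≤ b) (hu0 : 0 ≤ u) (hu : u ≤ 1/2) (hp1 : 1 ≤ p)
    (hpb : p + 1 ≤ π^2 * b^2) :
    Real.cos (π*u) ^ p * ((b+u) ^ (-p) + (b-u) ^ (-p)) ≤ 2 * b ^ (-p) := by
  have hπ : (3:ℝ) < π := Real.pi_gt_three
  have hb0 : (0:ℝ) < b := by linarith
  have hp0 : (0:ℝ) < p := by linarith
  have hw20' : (81:ℝ)/4 ≤ π^2 * b^2 := by
    have h9 : (9:ℝ) ≤ π^2 := by nlinarith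
    have hb2 : (9/4:ℝ) ≤ b^2 := by nlinarith
    calc (81:ℝ)/4 = 9 * (9/4) := by norm_num
      _ ≤ π^2 * b^2 := mul_le_mul h9 hb2 (by norm_num) (by positivity)
  rcases eq_or_lt_of_le hu with hu2 | hu2
  · -- u = 1/2 : cos = 0
    rw [hu2]
    have : Real.cos (π * (1/2)) = 0 := by
      rw [show π * (1/2) = π/2 by ring, Real.cos_pi_div_two]
    rw [this, Real.zero_rpow (ne_of_gt hp0), zero_mul]
    positivity
  · -- u < 1/2
    have hcpos : 0 < Real.cos (π*u) := by
      apply Real.cos_pos_of_mem_Ioo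
      constructor
      · nlinarith
      · nlinarith
    have hbu1 : (0:ℝ) < b + u := by linarith
    have hbu2 : (0:ℝ) < b - u := by linarith
    obtain ⟨t, htdef⟩ : ∃ y, y = u / b := ⟨_, rfl⟩
    have ht0 : 0 ≤ t := by rw [htdef]; exact div_nonneg hu0 (le_of_lt hb0)
    have ht3 : t ≤ 1/3 := by
      rw [htdef, div_le_iff₀ hb0]; linarith
    have hut : u = b * t := by rw [htdef]; field_simp
    have ht2 : t^2 ≤ 1/2 := by nlinarith
    have ht4 : t^4 ≤ t^3 * (1/3) := by nlinarith [mul_le_mul_of_nonneg_left ht3 (pow_nonneg ht0 3)]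
    have h1t : (0:ℝ) < 1 + t := by linarith
    have h2t : (0:ℝ) < 1 - t := by linarith
    have hsplit1 : (b + u) ^ (-p) = b ^ (-p) * (1+t) ^ (-p) := by
      rw [← Real.mul_rpow (le_of_lt hb0) (le_of_lt h1t)]
      congr 1
      rw [hut]; ring
    have hsplit2 : (b - u) ^ (-p) = b ^ (-p) * (1-t) ^ (-p) := by
      rw [← Real.mul_rpow (le_of_lt hb0) (le_of_lt h2t)]
      congr 1
      rw [hut]; ring
    have hBpos : (0:ℝ) < b ^ (-p) := Real.rpow_pos_of_pos hb0 _
    have core : Real.cos (π*u) ^ p * ((1+t) ^ (-p) + (1-t) ^ (-p)) ≤ 2 := by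
      clear hsplit1 hsplit2 hBpos
      obtain ⟨lc, hlcdef⟩ : ∃ y, y = Real.log (Real.cos (π*u)) := ⟨_, rfl⟩
      obtain ⟨l1, hl1def⟩ : ∃ y, y = Real.log (1+t) := ⟨_, rfl⟩
      obtain ⟨l2, hl2def⟩ : ∃ y, y = Real.log (1-t) := ⟨_, rfl⟩
      obtain ⟨m, hmdef⟩ : ∃ y, y = (l1 + l2)/2 := ⟨_, rfl⟩
      obtain ⟨d, hddef⟩ : ∃ y, y = (l1 - l2)/2 := ⟨_, rfl⟩
      have hd0 : 0 ≤ d := by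
        have h12 : Real.log (1-t) ≤ Real.log (1+t) :=
          Real.log_le_log h2t (by linarith)
        rw [hddef, hl1def, hl2def]
        linarith
      have hE : lc*p - m*p + Real.log (Real.cosh (d*p)) ≤ 0 := by
        have hθmem : π * u ∈ Set.Icc (0:ℝ) (π/2) := by
          constructor
          · positivity
          · nlinarith
        -- (i)
        have hlc : lc ≤ -(π^2*b^2 * t^2/2 + (π^2*b^2)^2 * t^4/12) := by
          rw [hlcdef]
          have h := L_cos (π*u) hθmem
          have hS := (Real.exp_pos (-((π*u)^2/2 + (π*u)^4/12))).le
          have h2 := mul_le_mul_of_nonneg_right h hS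
          rw [one_mul, mul_assoc, ← Real.exp_add] at h2
          simp only [add_neg_cancel, Real.exp_zero, mul_one] at h2
          have hlog := Real.log_le_log hcpos h2
          rw [Real.log_exp] at hlog
          calc Real.log (Real.cos (π*u)) ≤ -((π*u)^2/2 + (π*u)^4/12) := hlog
            _ = -(π^2*b^2 * t^2/2 + (π^2*b^2)^2 * t^4/12) := by rw [hut]; ring
        -- (ii)
        have hm : -m ≤ (t^2 + t^4)/2 := by
          have hl12 : l1 + l2 = Real.log (1 - t^2) := by
            rw [hl1def, hl2def, ← Real.log_mul (ne_of_gt h1t) (ne_of_gt h2t)]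
            congr 1; ring
          have hs : t^2 ∈ Set.Icc (0:ℝ) (1/2) := ⟨sq_nonneg t, ht2⟩
          have := L_log1m2 (t^2) hs
          rw [hmdef, hl12]
          linarith
        -- (iii)
        have hd : d ≤ t + (19/48) * t^3 := by
          have h1 := L_log1p t ⟨ht0, ht3⟩
          have h2 := L_log1m t ⟨ht0, ht3⟩
          rw [hddef, hl1def, hl2def]
          linarith
        have hdp : 0 ≤ d * p := mul_nonneg hd0 hp0.le
        have hcosh : Real.log (Real.cosh (d*p)) ≤ (d*p)^2/2 := L_logcosh _ hdp
        have hDD : d^2 ≤ t^2 + (5/6)*t^4 := arith_sq t d ht0 ht3 hd0 hd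
        have hd2 : Real.log (Real.cosh (d*p)) ≤ p^2 * (t^2 + (5/6)*t^4)/2 := by
          have h := arith_dp d p (t^2 + (5/6)*t^4) hDD
          linarith
        have b1 : lc * p ≤ -(π^2*b^2 * t^2/2 + (π^2*b^2)^2 * t^4/12) * p :=
          mul_le_mul_of_nonneg_right hlc hp0.le
        have b2 : -(m*p) ≤ ((t^2+t^4)/2) * p := by
          have := mul_le_mul_of_nonneg_right hm hp0.le
          linarith [this]
        have := arith_fin p (π^2*b^2) t (lc*p) (-(m*p)) (Real.log (Real.cosh (d*p)))
          hp1 hw20' hpb ht0 b1 b2 hd2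
        linarith [this]
      have e1 : Real.cos (π*u) ^ p = Real.exp (lc * p) := by
        rw [hlcdef]; exact Real.rpow_def_of_pos hcpos p
      have e2 : (1+t) ^ (-p) = Real.exp (l1 * (-p)) := by
        rw [hl1def]; exact Real.rpow_def_of_pos h1t (-p)
      have e3 : (1-t) ^ (-p) = Real.exp (l2 * (-p)) := by
        rw [hl2def]; exact Real.rpow_def_of_pos h2t (-p)
      have hcoshpos : (0:ℝ) < Real.cosh (d*p) := Real.cosh_pos _
      have main_eq : Real.cos (π*u) ^ p * ((1+t) ^ (-p) + (1-t) ^ (-p))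
          = 2 * Real.exp (lc*p - m*p + Real.log (Real.cosh (d*p))) := by
        rw [e1, e2, e3, mul_add, ← Real.exp_add, ← Real.exp_add]
        have a1 : lc * p + l1 * (-p) = (lc*p - m*p) + (-(d*p)) := by
          rw [hmdef, hddef]; ring
        have a2 : lc * p + l2 * (-p) = (lc*p - m*p) + (d*p) := by
          rw [hmdef, hddef]; ring
        rw [a1, a2, Real.exp_add, Real.exp_add, Real.exp_add,
          Real.exp_log hcoshpos, Real.cosh_eq]
        ring
      rw [main_eq]
      have h1 : Real.exp (lc*p - m*p + Real.log (Real.cosh (d*p))) ≤ 1 :=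
        Real.exp_le_one_iff.2 hE
      calc 2 * Real.exp (lc*p - m*p + Real.log (Real.cosh (d*p))) ≤ 2 * 1 :=
            mul_le_mul_of_nonneg_left h1 (by norm_num)
        _ = 2 := by norm_num
    calc Real.cos (π*u) ^ p * ((b+u) ^ (-p) + (b-u) ^ (-p))
        = b ^ (-p) * (Real.cos (π*u) ^ p * ((1+t) ^ (-p) + (1-t) ^ (-p))) := by
          rw [hsplit1, hsplit2]; ring
      _ ≤ b ^ (-p) * 2 := mul_le_mul_of_nonneg_left core (le_of_lt hBpos)
      _ = 2 * b ^ (-p) := by ring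

lemma key_pair (b u p : ℝ) (hb : 3/2 ≤ b) (hu : |u| ≤ 1/2) (hp1 : 1 ≤ p)
    (hpb : p + 1 ≤ π^2 * b^2) :
    Real.cos (π*u) ^ p * ((b+u) ^ (-p) + (b-u) ^ (-p)) ≤ 2 * b ^ (-p) := by
  rcases le_or_gt 0 u with h | h
  · exact key_half b u p hb h (abs_le.1 hu).2 hp1 hpb
  · have h2 := key_half b (-u) p hb (by linarith) (by linarith [(abs_le.1 hu).1]) hp1 hpb
    rw [show π * -u = -(π*u) by ring, Real.cos_neg,
      show b + -u = b - u by ring, show b - -u = b + u by ring] at h2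
    linarith

lemma summable_aux (p a : ℝ) (hp : 1 < p) (ha : 1 ≤ a) :
    Summable (fun k : ℕ => ((k : ℝ) + a) ^ (-p)) := by
  have base : Summable (fun n : ℕ => ((n : ℝ)) ^ (-p)) := by
    have h := Real.summable_nat_rpow_inv.2 hp
    apply h.congr
    intro n
    rw [Real.rpow_neg (Nat.cast_nonneg n)]
  have base1 : Summable (fun n : ℕ => (((n + 1 : ℕ) : ℝ)) ^ (-p)) :=
    (summable_nat_add_iff 1).2 base
  apply Summable.of_nonneg_of_le (fun k => Real.rpow_nonneg (by positivity) _) _ base1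
  intro k
  apply Real.rpow_le_rpow_of_nonpos (by positivity)
  · push_cast
    linarith
  · linarith

lemma abs_sin_shift (a : ℝ) (n : ℤ) : |Real.sin (a + n * π)| = |Real.sin a| := by
  rw [Real.sin_add_int_mul_pi, abs_mul]
  have : |(-1 : ℝ) ^ n| = 1 := by
    rcases Int.even_or_odd n with he | ho
    · rw [he.neg_one_zpow]; norm_num
    · rw [Odd.neg_one_zpow ho]; norm_num
  rw [this, one_mul]

lemma summable_term (p c s : ℝ) (hp : 1 < p) (hc : 1 ≤ c) (hs0 : 0 ≤ s) (hs1 : s ≤ 1) :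
    Summable (fun k : ℕ => (s / (π * (c + k))) ^ p) := by
  have hπ : (3:ℝ) < π := Real.pi_gt_three
  have base := summable_aux p c hp hc
  apply Summable.of_nonneg_of_le _ _ base
  · intro k
    apply Real.rpow_nonneg
    positivity
  · intro k
    have hz : (0:ℝ) < c + k := by positivity
    have h1 : s / (π * (c+k)) ≤ (c+k)⁻¹ := by
      rw [div_le_iff₀ (by positivity)]
      rw [inv_mul_eq_div, le_div_iff₀ hz]
      nlinarith
    calc (s/(π*(c+k)))^p ≤ ((c+k)⁻¹)^p :=
          Real.rpow_le_rpow (by positivity) h1 (by linarith)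
      _ = (c+k)^(-p) := by
          rw [Real.inv_rpow hz.le, ← Real.rpow_neg hz.le]
      _ = ((k:ℝ) + c)^(-p) := by rw [add_comm]

lemma tail_sum_eq (N : ℕ) (hN : 1 ≤ N) (p : ℝ) (hp1 : 1 < p) (x : ℝ)
    (hx0 : 0 < x) (hx1 : x < 1) :
    (∑' n : ℤ, if (N : ℝ) < |x - (n : ℝ)| then |_root_.sinc (x - n)| ^ p else 0)
      = ∑' k : ℕ, ((Real.sin (π*x) / (π * (x + (N:ℝ) + k))) ^ p
                  + (Real.sin (π*x) / (π * ((N:ℝ) + 1 - x + k))) ^ p) := by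
  have hπ : (3:ℝ) < π := Real.pi_gt_three
  have hπ0 : (0:ℝ) < π := by linarith
  have hs : 0 < Real.sin (π*x) := Real.sin_pos_of_pos_of_lt_pi (by positivity) (by nlinarith)
  have hs1 : Real.sin (π*x) ≤ 1 := Real.sin_le_one _
  have hN1 : (1:ℝ) ≤ (N:ℝ) := by exact_mod_cast hN
  set s := Real.sin (π*x) with hsdef
  set F : ℤ → ℝ := fun n => if (N : ℝ) < |x - (n : ℝ)| then |_root_.sinc (x - (n:ℝ))| ^ p else 0
    with hFdef
  -- term evaluation
  have hterm : ∀ n : ℤ, (N:ℝ) < |x - (n:ℝ)| →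
      |_root_.sinc (x - (n:ℝ))| ^ p = (s / (π * |x - (n:ℝ)|)) ^ p := by
    intro n hn
    have hz : x - (n:ℝ) ≠ 0 := by
      intro h
      rw [h] at hn
      simp at hn
      linarith
    have habs : |Real.sin (π * (x - (n:ℝ)))| = s := by
      have harg : π * (x - (n:ℝ)) = π * x + (-n : ℤ) * π := by push_cast; ring
      rw [harg, abs_sin_shift, abs_of_pos hs]
    rw [_root_.sinc, if_neg hz, abs_div, abs_mul, abs_of_pos hπ0, habs]
  -- values on the positive side
  have habs_pos : ∀ k : ℕ, |x - (((k + (N+1) : ℕ) : ℤ) : ℝ)| = (N:ℝ) + 1 - x + k := by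
    intro k
    have hc : (((k + (N+1) : ℕ) : ℤ) : ℝ) = (k:ℝ) + (N:ℝ) + 1 := by push_cast; ring
    rw [hc, abs_of_neg (by linarith : x - ((k:ℝ) + (N:ℝ) + 1) < 0)]
    ring
  have hpos : ∀ k : ℕ, F ((k + (N+1) : ℕ) : ℤ) = (s / (π * ((N:ℝ) + 1 - x + k))) ^ p := by
    intro k
    have hgt : (N:ℝ) < |x - (((k + (N+1) : ℕ) : ℤ) : ℝ)| := by
      rw [habs_pos k]
      have : (0:ℝ) ≤ k := Nat.cast_nonneg k
      linarith
    show (if (N : ℝ) < |x - (((k + (N+1) : ℕ) : ℤ) : ℝ)| then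
        |_root_.sinc (x - (((k + (N+1) : ℕ) : ℤ):ℝ))| ^ p else 0) = _
    rw [if_pos hgt, hterm _ hgt, habs_pos k]
  -- values on the negative side
  have hneg : ∀ k : ℕ, F (-(((k + (N-1) : ℕ) : ℤ) + 1))
      = (s / (π * (x + (N:ℝ) + k))) ^ p := by
    intro k
    obtain ⟨n, hn⟩ : ∃ n : ℤ, n = -(((k + (N-1) : ℕ) : ℤ) + 1) := ⟨_, rfl⟩
    rw [← hn]
    have hk0 : (0:ℝ) ≤ (k:ℝ) := Nat.cast_nonneg k
    have hcast : ((n : ℤ) : ℝ) = -((k:ℝ) + (N:ℝ)) := by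
      rw [hn]
      push_cast [Nat.cast_sub hN]
      ring
    have habs : |x - (n:ℝ)| = x + (N:ℝ) + k := by
      rw [hcast, abs_of_pos (by linarith : (0:ℝ) < x - -((k:ℝ) + (N:ℝ)))]
      ring
    have hgt : (N:ℝ) < |x - (n:ℝ)| := by
      rw [habs]; linarith
    show (if (N : ℝ) < |x - (n : ℝ)| then |_root_.sinc (x - (n:ℝ))| ^ p else 0) = _
    rw [if_pos hgt, hterm _ hgt, habs]
  -- middle zeros
  have hmid : ∀ i ∈ Finset.range (N+1), F (i : ℤ) = 0 := by
    intro i hi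
    have hiN : (i:ℝ) ≤ (N:ℝ) := by exact_mod_cast Nat.lt_succ_iff.1 (Finset.mem_range.1 hi)
    have hi0 : (0:ℝ) ≤ (i:ℝ) := Nat.cast_nonneg i
    show (if (N : ℝ) < |x - ((i:ℤ):ℝ)| then |_root_.sinc (x - ((i:ℤ):ℝ))| ^ p else 0) = 0
    rw [if_neg]
    rw [not_lt, abs_le]
    push_cast
    constructor <;> linarith
  have hmidneg : ∀ i ∈ Finset.range (N-1), F (-((i:ℤ) + 1)) = 0 := by
    intro i hi
    obtain ⟨n, hn⟩ : ∃ n : ℤ, n = -((i:ℤ) + 1) := ⟨_, rfl⟩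
    rw [← hn]
    have hi2 : i + 2 ≤ N := by
      have := Finset.mem_range.1 hi
      omega
    have hiN : (i:ℝ) + 2 ≤ (N:ℝ) := by exact_mod_cast hi2
    have hi0 : (0:ℝ) ≤ (i:ℝ) := Nat.cast_nonneg i
    have hcast : ((n : ℤ) : ℝ) = -((i:ℝ) + 1) := by rw [hn]; push_cast; ring
    show (if (N : ℝ) < |x - (n:ℝ)| then |_root_.sinc (x - (n:ℝ))| ^ p else 0) = 0
    rw [if_neg]
    rw [not_lt, hcast, abs_le]
    constructor <;> linarith
  -- summability
  have hsum_bb : Summable (fun k : ℕ => (s / (π * ((N:ℝ) + 1 - x + k))) ^ p) :=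
    summable_term p ((N:ℝ) + 1 - x) s hp1 (by linarith) hs.le hs1
  have hsum_a : Summable (fun k : ℕ => (s / (π * (x + (N:ℝ) + k))) ^ p) :=
    summable_term p (x + (N:ℝ)) s hp1 (by linarith) hs.le hs1
  have hsumF_pos : Summable (fun n : ℕ => F (n : ℤ)) := by
    rw [← summable_nat_add_iff (N+1)]
    exact Summable.congr hsum_bb (fun k => (hpos k).symm)
  have hsumF_neg : Summable (fun n : ℕ => F (-((n:ℤ) + 1))) := by
    rw [← summable_nat_add_iff (N-1)]
    apply Summable.congr hsum_a
    intro k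
    exact (hneg k).symm
  -- split the integer sum
  have hsplit : (∑' n : ℤ, F n) = (∑' n : ℕ, F (n:ℤ)) + ∑' n : ℕ, F (-((n:ℤ)+1)) :=
    tsum_of_nat_of_neg_add_one hsumF_pos hsumF_neg
  have hposSum : (∑' n : ℕ, F (n:ℤ)) = ∑' k : ℕ, (s / (π * ((N:ℝ) + 1 - x + k))) ^ p := by
    rw [← Summable.sum_add_tsum_nat_add (N+1) hsumF_pos, Finset.sum_eq_zero hmid, zero_add]
    exact tsum_congr (fun k => hpos k)
  have hnegSum : (∑' n : ℕ, F (-((n:ℤ)+1))) = ∑' k : ℕ, (s / (π * (x + (N:ℝ) + k))) ^ p := by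
    rw [← Summable.sum_add_tsum_nat_add (N-1) hsumF_neg, Finset.sum_eq_zero hmidneg, zero_add]
    exact tsum_congr (fun k => hneg k)
  calc (∑' n : ℤ, F n) = (∑' n : ℕ, F (n:ℤ)) + ∑' n : ℕ, F (-((n:ℤ)+1)) := hsplit
    _ = (∑' k : ℕ, (s / (π * ((N:ℝ) + 1 - x + k))) ^ p)
        + ∑' k : ℕ, (s / (π * (x + (N:ℝ) + k))) ^ p := by rw [hposSum, hnegSum]
    _ = ∑' k : ℕ, ((s / (π * (x + (N:ℝ) + k))) ^ p + (s / (π * ((N:ℝ) + 1 - x + k))) ^ p) := by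
        rw [Summable.tsum_add hsum_a hsum_bb]
        ring

lemma div_rpow_helper (c w q : ℝ) (hc : 0 ≤ c) (hw : 0 < w) :
    (c / (π * w)) ^ q = π ^ (-q) * (c ^ q * w ^ (-q)) := by
  have hπ0 : (0:ℝ) < π := Real.pi_pos
  rw [Real.div_rpow hc (by positivity), Real.mul_rpow hπ0.le hw.le,
    Real.rpow_neg hπ0.le, Real.rpow_neg hw.le, div_eq_mul_inv, mul_inv]
  ring

lemma rhs_form (N k : ℕ) (p : ℝ) :
    2 * (2/π) ^ p * (1 / (2 * ((k:ℝ) + 1 + (N:ℝ)) - 1) ^ p)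
      = π ^ (-p) * (2 * ((N:ℝ) + (k:ℝ) + 1/2) ^ (-p)) := by
  have hπ0 : (0:ℝ) < π := Real.pi_pos
  have hb : (0:ℝ) < (N:ℝ) + (k:ℝ) + 1/2 := by positivity
  have h2b : 2 * ((k:ℝ) + 1 + (N:ℝ)) - 1 = 2 * ((N:ℝ) + (k:ℝ) + 1/2) := by ring
  rw [h2b, Real.mul_rpow (by norm_num : (0:ℝ) ≤ 2) hb.le,
    Real.div_rpow (by norm_num : (0:ℝ) ≤ 2) hπ0.le,
    Real.rpow_neg hπ0.le, Real.rpow_neg hb.le]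
  have h2p : (0:ℝ) < (2:ℝ) ^ p := Real.rpow_pos_of_pos two_pos p
  have hπp : (0:ℝ) < π ^ p := Real.rpow_pos_of_pos hπ0 p
  have hbp : (0:ℝ) < ((N:ℝ) + (k:ℝ) + 1/2) ^ p := Real.rpow_pos_of_pos hb p
  field_simp

lemma pair_le (N k : ℕ) (hN : 1 ≤ N) (p x : ℝ) (hp1 : 1 < p)
    (hp2 : p ≤ π^2 * ((N:ℝ) + 1/2)^2 - 1) (hx0 : 0 ≤ x) (hx1 : x ≤ 1) :
    (Real.sin (π*x) / (π * (x + (N:ℝ) + k))) ^ p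
      + (Real.sin (π*x) / (π * ((N:ℝ) + 1 - x + k))) ^ p
      ≤ 2 * (2/π) ^ p * (1 / (2 * ((k:ℝ) + 1 + (N:ℝ)) - 1) ^ p) := by
  have hπ : (3:ℝ) < π := Real.pi_gt_three
  have hπ0 : (0:ℝ) < π := by linarith
  have hN1 : (1:ℝ) ≤ (N:ℝ) := by exact_mod_cast hN
  have hk0 : (0:ℝ) ≤ (k:ℝ) := Nat.cast_nonneg k
  have hcos : Real.sin (π*x) = Real.cos (π*(x - 1/2)) := by
    rw [show π*(x - 1/2) = -(π/2 - π*x) by ring, Real.cos_neg, Real.cos_pi_div_two_sub]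
  have hsin0 : 0 ≤ Real.sin (π*x) := by
    apply Real.sin_nonneg_of_nonneg_of_le_pi (by positivity)
    nlinarith
  have hz1 : (0:ℝ) < x + (N:ℝ) + k := by linarith
  have hz2 : (0:ℝ) < (N:ℝ) + 1 - x + k := by linarith
  have hkey := key_pair ((N:ℝ) + (k:ℝ) + 1/2) (x - 1/2) p
    (by linarith) (abs_le.2 ⟨by linarith, by linarith⟩) hp1.le
    (by
      have hsq : ((N:ℝ)+1/2)^2 ≤ ((N:ℝ)+(k:ℝ)+1/2)^2 := by nlinarith
      have h2 : π^2*((N:ℝ)+1/2)^2 ≤ π^2*((N:ℝ)+(k:ℝ)+1/2)^2 :=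
        mul_le_mul_of_nonneg_left hsq (sq_nonneg π)
      linarith)
  have e1 : x + (N:ℝ) + k = ((N:ℝ) + (k:ℝ) + 1/2) + (x - 1/2) := by ring
  have e2 : (N:ℝ) + 1 - x + k = ((N:ℝ) + (k:ℝ) + 1/2) - (x - 1/2) := by ring
  calc (Real.sin (π*x) / (π * (x + (N:ℝ) + k))) ^ p
        + (Real.sin (π*x) / (π * ((N:ℝ) + 1 - x + k))) ^ p
      = π ^ (-p) * (Real.cos (π*(x - 1/2)) ^ p
          * ((((N:ℝ) + (k:ℝ) + 1/2) + (x - 1/2)) ^ (-p)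
            + (((N:ℝ) + (k:ℝ) + 1/2) - (x - 1/2)) ^ (-p))) := by
        rw [← e1, ← e2, hcos, div_rpow_helper _ _ p (hcos ▸ hsin0) hz1,
          div_rpow_helper _ _ p (hcos ▸ hsin0) hz2]
        ring
    _ ≤ π ^ (-p) * (2 * ((N:ℝ) + (k:ℝ) + 1/2) ^ (-p)) := by
        apply mul_le_mul_of_nonneg_left hkey (Real.rpow_nonneg hπ0.le _)
    _ = 2 * (2/π) ^ p * (1 / (2 * ((k:ℝ) + 1 + (N:ℝ)) - 1) ^ p) := (rhs_form N k p).symm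

lemma pair_eq (N k : ℕ) (hN : 1 ≤ N) (p : ℝ) (hp0 : 0 < p) :
    (Real.sin (π*(1/2:ℝ)) / (π * ((1/2:ℝ) + (N:ℝ) + k))) ^ p
      + (Real.sin (π*(1/2:ℝ)) / (π * ((N:ℝ) + 1 - (1/2:ℝ) + k))) ^ p
      = 2 * (2/π) ^ p * (1 / (2 * ((k:ℝ) + 1 + (N:ℝ)) - 1) ^ p) := by
  have hπ0 : (0:ℝ) < π := Real.pi_pos
  have hN1 : (1:ℝ) ≤ (N:ℝ) := by exact_mod_cast hN
  have hk0 : (0:ℝ) ≤ (k:ℝ) := Nat.cast_nonneg k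
  have hsin : Real.sin (π*(1/2:ℝ)) = 1 := by
    rw [show π*(1/2:ℝ) = π/2 by ring, Real.sin_pi_div_two]
  have e1 : (1/2:ℝ) + (N:ℝ) + k = (N:ℝ) + (k:ℝ) + 1/2 := by ring
  have e2 : (N:ℝ) + 1 - (1/2:ℝ) + k = (N:ℝ) + (k:ℝ) + 1/2 := by ring
  have hb : (0:ℝ) < (N:ℝ) + (k:ℝ) + 1/2 := by positivity
  rw [hsin, e1, e2, div_rpow_helper _ _ p zero_le_one hb, rhs_form N k p,
    Real.one_rpow]
  ring

lemma rhs_summable (N : ℕ) (p : ℝ) (hp1 : 1 < p) :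
    Summable (fun n : ℕ => 1 / (2 * ((n:ℝ) + 1 + (N:ℝ)) - 1) ^ p) := by
  have base := summable_aux p 1 hp1 le_rfl
  apply Summable.of_nonneg_of_le _ _ base
  · intro n
    have hz : (0:ℝ) ≤ 2 * ((n:ℝ) + 1 + (N:ℝ)) - 1 := by
      have h1 : (0:ℝ) ≤ (n:ℝ) := Nat.cast_nonneg n
      have h2 : (0:ℝ) ≤ (N:ℝ) := Nat.cast_nonneg N
      linarith
    exact div_nonneg zero_le_one (Real.rpow_nonneg hz _)
  · intro n
    have h1 : (0:ℝ) ≤ (n:ℝ) := Nat.cast_nonneg n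
    have h2 : (0:ℝ) ≤ (N:ℝ) := Nat.cast_nonneg N
    have hz2 : (0:ℝ) < (n:ℝ) + 1 := by linarith
    have hle : ((n:ℝ)+1) ^ p ≤ (2 * ((n:ℝ) + 1 + (N:ℝ)) - 1) ^ p :=
      Real.rpow_le_rpow hz2.le (by linarith) (by linarith)
    calc 1 / (2 * ((n:ℝ) + 1 + (N:ℝ)) - 1) ^ p ≤ 1 / ((n:ℝ)+1) ^ p :=
          one_div_le_one_div_of_le (Real.rpow_pos_of_pos hz2 p) hle
      _ = ((n:ℝ) + 1) ^ (-p) := by rw [Real.rpow_neg hz2.le, one_div]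

lemma main_ineq_frac (N : ℕ) (hN : 1 ≤ N) (p : ℝ) (hp1 : 1 < p)
    (hp2 : p ≤ π^2 * ((N:ℝ)+1/2)^2 - 1) (x : ℝ) (hx0 : 0 < x) (hx1 : x < 1) :
    (∑' n : ℤ, if (N : ℝ) < |x - (n : ℝ)| then |_root_.sinc (x - n)| ^ p else 0)
      ≤ 2 * (2/π)^p * (∑' n : ℕ, 1 / (2 * ((n:ℝ) + 1 + (N:ℝ)) - 1) ^ p) := by
  have hπ : (3:ℝ) < π := Real.pi_gt_three
  have hN1 : (1:ℝ) ≤ (N:ℝ) := by exact_mod_cast hN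
  have hs : 0 < Real.sin (π*x) := Real.sin_pos_of_pos_of_lt_pi (by positivity) (by nlinarith)
  have hs1 : Real.sin (π*x) ≤ 1 := Real.sin_le_one _
  rw [tail_sum_eq N hN p hp1 x hx0 hx1]
  have hsum_a := summable_term p (x + (N:ℝ)) (Real.sin (π*x)) hp1 (by linarith) hs.le hs1
  have hsum_bb := summable_term p ((N:ℝ) + 1 - x) (Real.sin (π*x)) hp1 (by linarith) hs.le hs1
  have hR : Summable (fun k : ℕ => 2 * (2/π)^p * (1 / (2 * ((k:ℝ) + 1 + (N:ℝ)) - 1) ^ p)) :=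
    (rhs_summable N p hp1).mul_left _
  calc (∑' k : ℕ, ((Real.sin (π*x) / (π * (x + (N:ℝ) + k))) ^ p
                  + (Real.sin (π*x) / (π * ((N:ℝ) + 1 - x + k))) ^ p))
      ≤ ∑' k : ℕ, 2 * (2/π)^p * (1 / (2 * ((k:ℝ) + 1 + (N:ℝ)) - 1) ^ p) :=
        Summable.tsum_le_tsum (fun k => pair_le N k hN p x hp1 hp2 hx0.le hx1.le)
          (hsum_a.add hsum_bb) hR
    _ = 2 * (2/π)^p * (∑' n : ℕ, 1 / (2 * ((n:ℝ) + 1 + (N:ℝ)) - 1) ^ p) := tsum_mul_left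

lemma main_eq_half (N : ℕ) (hN : 1 ≤ N) (p : ℝ) (hp1 : 1 < p) :
    (∑' n : ℤ, if (N : ℝ) < |(1/2:ℝ) - (n : ℝ)| then |_root_.sinc (1/2 - n)| ^ p else 0)
      = 2 * (2/π)^p * (∑' n : ℕ, 1 / (2 * ((n:ℝ) + 1 + (N:ℝ)) - 1) ^ p) := by
  rw [tail_sum_eq N hN p hp1 (1/2) (by norm_num) (by norm_num)]
  rw [tsum_congr (fun k => pair_eq N k hN p (by linarith))]
  exact tsum_mul_left

lemma main_int (N : ℕ) (hN : 1 ≤ N) (p : ℝ) (hp1 : 1 < p) (x : ℝ) (m : ℤ) (hm : x = m) :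
    (∑' n : ℤ, if (N : ℝ) < |x - (n : ℝ)| then |_root_.sinc (x - n)| ^ p else 0) = 0 := by
  have hN1 : (1:ℝ) ≤ (N:ℝ) := by exact_mod_cast hN
  have : ∀ n : ℤ, (if (N : ℝ) < |x - (n : ℝ)| then |_root_.sinc (x - n)| ^ p else 0) = 0 := by
    intro n
    by_cases h : (N:ℝ) < |x - (n:ℝ)|
    · rw [if_pos h]
      have hne : x - (n:ℝ) ≠ 0 := by
        intro h0
        rw [h0] at h
        simp at h
        linarith
      have hsin : Real.sin (π * (x - (n:ℝ))) = 0 := by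
        have e : π * (x - (n:ℝ)) = ((m - n : ℤ) : ℝ) * π := by
          rw [hm]; push_cast; ring
        rw [e, Real.sin_int_mul_pi]
      rw [_root_.sinc, if_neg hne, hsin, zero_div, abs_zero, Real.zero_rpow (by linarith)]
    · rw [if_neg h]
  rw [tsum_congr this, tsum_zero]

lemma reindex (N : ℕ) (p x : ℝ) (m : ℤ) :
    (∑' n : ℤ, if (N : ℝ) < |x - (n : ℝ)| then |_root_.sinc (x - n)| ^ p else 0)
      = (∑' n : ℤ, if (N : ℝ) < |(x - m) - (n : ℝ)| then |_root_.sinc ((x - m) - n)| ^ p else 0) := by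
  rw [← (Equiv.subRight m).tsum_eq (fun n : ℤ =>
    if (N : ℝ) < |(x - m) - (n : ℝ)| then |_root_.sinc ((x - m) - n)| ^ p else 0)]
  apply tsum_congr
  intro n
  simp only [Equiv.subRight_apply]
  have e : (x - (m:ℝ)) - ((n - m : ℤ) : ℝ) = x - (n:ℝ) := by push_cast; ring
  rw [e]

theorem sinc_tail_sum_sharp_bound (N : ℕ) (hN : 1 ≤ N) (p : ℝ) (hp1 : 1 < p)
    (hp2 : p ≤ π ^ 2 * ((N : ℝ) + 1/2) ^ 2 - 1) :
    (∀ x : ℝ,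
      (∑' n : ℤ, if (N : ℝ) < |x - (n : ℝ)| then |_root_.sinc (x - n)| ^ p else 0)
        ≤ 2 * (2 / π) ^ p * lam p N) ∧
    (∑' n : ℤ, if (N : ℝ) < |(1/2 : ℝ) - (n : ℝ)| then |_root_.sinc (1/2 - n)| ^ p else 0)
      = 2 * (2 / π) ^ p * lam p N := by
  have hlam : lam p N = ∑' n : ℕ, 1 / (2 * ((n:ℝ) + 1 + (N:ℝ)) - 1) ^ p := rfl
  constructor
  · intro x
    by_cases hfr : Int.fract x = 0
    · have hx : x = ((⌊x⌋ : ℤ) : ℝ) := by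
        have h1 := Int.self_sub_floor x
        rw [hfr] at h1
        linarith
      rw [main_int N hN p hp1 x ⌊x⌋ hx]
      have h2 : 0 ≤ lam p N := by
        rw [hlam]
        apply tsum_nonneg
        intro n
        have hz : (0:ℝ) ≤ 2 * ((n:ℝ) + 1 + (N:ℝ)) - 1 := by
          have h1 : (0:ℝ) ≤ (n:ℝ) := Nat.cast_nonneg n
          have h2 : (0:ℝ) ≤ (N:ℝ) := Nat.cast_nonneg N
          linarith
        exact div_nonneg zero_le_one (Real.rpow_nonneg hz _)
      have h1 : (0:ℝ) ≤ 2 * (2/π)^p :=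
        mul_nonneg (by norm_num) (Real.rpow_nonneg (by positivity) p)
      exact mul_nonneg h1 h2
    · rw [reindex N p x ⌊x⌋]
      have h0 : 0 < x - ((⌊x⌋:ℤ):ℝ) := by
        have h1 := Int.self_sub_floor x
        have h2 := Int.fract_nonneg x
        rcases lt_or_eq_of_le h2 with h3 | h3
        · linarith
        · exact absurd h3.symm hfr
      have h1 : x - ((⌊x⌋:ℤ):ℝ) < 1 := by
        have h2 := Int.fract_lt_one x
        have h3 := Int.self_sub_floor x
        linarith
      calc (∑' n : ℤ, if (N : ℝ) < |(x - ⌊x⌋) - (n : ℝ)| then |_root_.sinc ((x - ⌊x⌋) - n)| ^ p else 0)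
          ≤ 2 * (2/π)^p * (∑' n : ℕ, 1 / (2 * ((n:ℝ) + 1 + (N:ℝ)) - 1) ^ p) :=
            main_ineq_frac N hN p hp1 hp2 _ h0 h1
        _ = 2 * (2 / π) ^ p * lam p N := by rw [hlam]
  · rw [main_eq_half N hN p hp1, hlam]
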